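/- arXiv:2507.05097 — 2 statements merged into one kernel-verified Lean document; each statement's English description precedes it below -/
import Mathlib

section
/- Let V be a finite-dimensional real inner product space, α ∈ ℝ, and T : V → V a linear map of the form T = α·Id + J with J skew-adjoint. Then for any orthonormal basis (Ā_i) and positive reals (g_i), defining A_i := Ā_i/√g_i, one has Σ_{i,j} (g_j/g_i)⟨T Ā_i, Ā_j⟩² − Σ_i ⟨T Ā_i, T Ā_i⟩ = Σ_{i,j} ⟨J Ā_i, Ā_j⟩² (g_j/g_i − 1) (equivalently, the squared norm of the g-symmetrization of T satisfies ‖S^g(T)‖² = α² dim V + (1/4) Σ_{i,j} ⟨J Ā_i, Ā_j⟩² (g_i/g_j + g_j/g_i − 2), where g(x,y) = ⟨Px, y⟩ with P diagonal with eigenvalues g_i in the basis Ā_i and S^g(T) = (T + T^{t_g})/2). -/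
open scoped RealInnerProductSpace

/-- For `T = α·Id + J` with `J` skew-adjoint, the moment-map identity
`Σ_{i,j} (g_j/g_i)⟨T Ā_i, Ā_j⟩² − Σ_i ⟨T Ā_i, T Ā_i⟩
  = Σ_{i,j} ⟨J Ā_i, Ā_j⟩² (g_j/g_i − 1)` holds. -/
theorem stmt12 {V : Type*} [NormedAddCommGroup V] [InnerProductSpace ℝ V]
    {d : ℕ} (b : OrthonormalBasis (Fin d) ℝ V) (g : Fin d → ℝ)
    (hg : ∀ i, 0 < g i) (α : ℝ) (J T : V →ₗ[ℝ] V)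
    (hskew : ∀ x y : V, ⟪J x, y⟫ = -⟪x, J y⟫)
    (hT : T = α • LinearMap.id + J) :
    (∑ i, ∑ j, (g j / g i) * ⟪T (b i), b j⟫ ^ 2) - ∑ i, ⟪T (b i), T (b i)⟫
      = ∑ i, ∑ j, ⟪J (b i), b j⟫ ^ 2 * (g j / g i - 1) := by
  have hid : ∀ i j, ⟪T (b i), b j⟫ = α * ⟪b i, b j⟫ + ⟪J (b i), b j⟫ := by
    intro i j
    rw [hT]
    simp [inner_add_left, real_inner_smul_left]
  have hnorm : ∀ i, ⟪T (b i), T (b i)⟫ = ∑ j, ⟪T (b i), b j⟫ ^ 2 := by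
    intro i
    rw [← b.sum_inner_mul_inner]
    refine Finset.sum_congr rfl fun j _ => ?_
    rw [real_inner_comm (b j)]; ring
  simp_rw [hnorm, ← Finset.sum_sub_distrib]
  refine Finset.sum_congr rfl fun i _ => Finset.sum_congr rfl fun j _ => ?_
  rw [hid]
  rcases eq_or_ne i j with h | h
  · subst h
    rw [div_self (hg i).ne']
    ring
  · have h0 : ⟪b i, b j⟫ = (0 : ℝ) := b.orthonormal.2 h
    rw [h0]; ring
end

section
/- Let X be a contractible topological space, A ⊆ X an open subset, and suppose there exists a continuous semiflow φ : [0,∞) × X → X with φ₀ = id, φ_t(A) ⊆ A for all t ≥ 0, and such that for every compact K ⊆ X there is a finite time T_K with φ_t(K) ⊆ A for all t ≥ T_K (A is a global attractor). Then every map from a sphere Sᵈ into A is nullhomotopic in A; i.e. all homotopy groups π_d(A) vanish. -/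
open scoped NNReal

/-- If `A` is an open global attractor of a continuous semiflow on a
contractible space `X`, invariant under the flow, then every sphere map into
`A` is nullhomotopic within `A`. -/
theorem stmt14 {X : Type*} [TopologicalSpace X] [ContractibleSpace X]
    (A : Set X) (hA : IsOpen A) (φ : ℝ≥0 × X → X) (hφ : Continuous φ)
    (hid : ∀ x, φ (0, x) = x)
    (hsemi : ∀ s t : ℝ≥0, ∀ x, φ (s + t, x) = φ (s, φ (t, x)))
    (hinv : ∀ t : ℝ≥0, ∀ x ∈ A, φ (t, x) ∈ A)
    (hattr : ∀ K : Set X, IsCompact K →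
      ∃ T : ℝ≥0, ∀ t ≥ T, ∀ x ∈ K, φ (t, x) ∈ A)
    (d : ℕ)
    (f : C(Metric.sphere (0 : EuclideanSpace ℝ (Fin (d + 1))) 1, X))
    (hf : ∀ z, f z ∈ A) :
    ∃ c ∈ A, ∃ H : ContinuousMap.Homotopy f (ContinuousMap.const _ c),
      ∀ p, H p ∈ A := by
  -- f is nullhomotopic in the contractible space X
  have hnull : f.Nullhomotopic := by
    have := (id_nullhomotopic X).comp_left f
    simpa using this
  obtain ⟨x₀, ⟨G⟩⟩ := hnull
  -- the image of G is compact
  have hK : IsCompact (Set.range G) := isCompact_range G.continuous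
  obtain ⟨T, hT⟩ := hattr _ hK
  -- intermediate map
  let g : C(Metric.sphere (0 : EuclideanSpace ℝ (Fin (d + 1))) 1, X) :=
    ⟨fun z => φ (T, f z), hφ.comp (continuous_const.prodMk f.continuous)⟩
  -- first homotopy: flow f to g
  let H₁ : ContinuousMap.Homotopy f g :=
    { toFun := fun p => φ (Real.toNNReal p.1 * T, f p.2)
      continuous_toFun := hφ.comp (((continuous_real_toNNReal.comp
          (continuous_subtype_val.comp continuous_fst)).mul
            continuous_const).prodMk (f.continuous.comp continuous_snd))
      map_zero_left := fun z => by simp [hid]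
      map_one_left := fun z => by simp [g] }
  -- second homotopy: flow the contraction G at time T
  let H₂ : ContinuousMap.Homotopy g (ContinuousMap.const _ (φ (T, x₀))) :=
    { toFun := fun p => φ (T, G p)
      continuous_toFun := hφ.comp (continuous_const.prodMk G.continuous)
      map_zero_left := fun z => by simp [g]
      map_one_left := fun z => by simp }
  have hH₁ : ∀ p, H₁ p ∈ A := fun p => hinv _ _ (hf p.2)
  have hH₂ : ∀ p, H₂ p ∈ A := fun p => hT T le_rfl _ ⟨p, rfl⟩
  have hc : φ (T, x₀) ∈ A := by
    obtain ⟨z, hz⟩ := (NormedSpace.sphere_nonempty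
      (E := EuclideanSpace ℝ (Fin (d + 1))) (x := 0)).mpr (zero_le_one : (0:ℝ) ≤ 1)
    have := hH₂ (1, ⟨z, hz⟩)
    simpa using this
  refine ⟨φ (T, x₀), hc, H₁.trans H₂, fun p => ?_⟩
  rw [ContinuousMap.Homotopy.trans_apply]
  split <;> [exact hH₁ _; exact hH₂ _]
end
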